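/- Let ρ^{ABX} be a tripartite state that is classical on the joint system AX, i.e., ρ^{ABX} = Σ_{a,x} p(a,x) |a⟩⟨a| ⊗ ρ^B_{a,x} ⊗ |x⟩⟨x| for orthonormal bases {|a⟩} of H_A and {|x⟩} of H_X. Then S(AX) + S(BX) − S(ABX) − S(X) ≤ min{S(A), S(B)}. -/

import Mathlib

open Matrix BigOperators ComplexOrder

noncomputable section

/-- Von Neumann entropy of a matrix (through its eigenvalues when Hermitian). -/
def entropy {n : Type*} [Fintype n] [DecidableEq n] (ρ : Matrix n n ℂ) : ℝ :=
  if h : ρ.IsHermitian then ∑ i, Real.negMulLog (h.eigenvalues i) else 0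

variable {A B X : Type*} [Fintype A] [DecidableEq A] [Fintype B] [DecidableEq B]
  [Fintype X] [DecidableEq X]

/-- Reduced state on AX. -/
def redAX (ρ : Matrix (A × B × X) (A × B × X) ℂ) : Matrix (A × X) (A × X) ℂ :=
  Matrix.of fun p q => ∑ b, ρ (p.1, b, p.2) (q.1, b, q.2)

/-- Reduced state on BX. -/
def redBX (ρ : Matrix (A × B × X) (A × B × X) ℂ) : Matrix (B × X) (B × X) ℂ :=
  Matrix.of fun p q => ∑ a, ρ (a, p.1, p.2) (a, q.1, q.2)

/-- Reduced state on X. -/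
def redX (ρ : Matrix (A × B × X) (A × B × X) ℂ) : Matrix X X ℂ :=
  Matrix.of fun x x' => ∑ a, ∑ b, ρ (a, b, x) (a, b, x')

/-- Reduced state on A. -/
def redA (ρ : Matrix (A × B × X) (A × B × X) ℂ) : Matrix A A ℂ :=
  Matrix.of fun a a' => ∑ b, ∑ x, ρ (a, b, x) (a', b, x)

/-- Reduced state on B. -/
def redB (ρ : Matrix (A × B × X) (A × B × X) ℂ) : Matrix B B ℂ :=
  Matrix.of fun b b' => ∑ a, ∑ x, ρ (a, b, x) (a, b', x)

namespace Scratch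

variable {n m : Type*} [Fintype n] [DecidableEq n] [Fintype m] [DecidableEq m]

lemma charpoly_conj (V W M : Matrix n n ℂ) (h : V * W = 1) :
    (V * M * W).charpoly = M.charpoly := by
  have hWV : W * V = 1 := mul_eq_one_comm.mp h
  let F : Matrix n n ℂ →+* Matrix n n (Polynomial ℂ) := (Polynomial.C : ℂ →+* Polynomial ℂ).mapMatrix
  have hsc : ∀ (P : Matrix n n (Polynomial ℂ)), Matrix.scalar n (Polynomial.X : Polynomial ℂ) * P = P * Matrix.scalar n (Polynomial.X : Polynomial ℂ) := by
    intro P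
    rw [Matrix.scalar_commute (Polynomial.X : Polynomial ℂ) (fun r => (Commute.all _ r)) P]
  have hch : charmatrix (V * M * W) = F V * charmatrix M * F W := by
    unfold charmatrix
    rw [mul_sub, sub_mul]
    congr 1
    · rw [Matrix.mul_assoc, hsc (F W), ← Matrix.mul_assoc, ← _root_.map_mul, h, _root_.map_one,
        Matrix.one_mul]
    · simp [F, Matrix.mul_assoc]
  rw [Matrix.charpoly, Matrix.charpoly, hch, Matrix.det_mul, Matrix.det_mul]
  have h1 : (F V).det * (F W).det = 1 := by
    rw [← Matrix.det_mul, ← _root_.map_mul, h, _root_.map_one, Matrix.det_one]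
  calc (F V).det * (charmatrix M).det * (F W).det
      = ((F V).det * (F W).det) * (charmatrix M).det := by ring
    _ = (charmatrix M).det := by rw [h1, one_mul]

end Scratch

namespace Scratch2

variable {n m : Type*} [Fintype n] [DecidableEq n] [Fintype m] [DecidableEq m]

lemma charpoly_diagonal_real (d : n → ℝ) :
    (Matrix.diagonal (fun i => (d i : ℂ))).charpoly
      = ∏ i, (Polynomial.X - Polynomial.C ((d i : ℂ))) := by
  rw [Matrix.charpoly]
  have : charmatrix (Matrix.diagonal (fun i => (d i : ℂ)))
      = Matrix.diagonal (fun i => (Polynomial.X - Polynomial.C ((d i : ℂ)))) := by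
    ext i j
    by_cases h : i = j
    · subst h; simp
    · simp [h, Matrix.diagonal_apply_ne _ h]
  rw [this, Matrix.det_diagonal]

lemma charpoly_hermitian {M : Matrix n n ℂ} (h : M.IsHermitian) :
    M.charpoly = ∏ i, (Polynomial.X - Polynomial.C ((h.eigenvalues i : ℝ) : ℂ)) := by
  have hsp := h.spectral_theorem
  have hU : (h.eigenvectorUnitary : Matrix n n ℂ) * (star h.eigenvectorUnitary : Matrix n n ℂ)
      = 1 := by
    exact (Matrix.mem_unitaryGroup_iff).mp h.eigenvectorUnitary.2
  rw [Unitary.conjStarAlgAut_apply] at hsp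
  calc M.charpoly
      = ((h.eigenvectorUnitary : Matrix n n ℂ)
          * Matrix.diagonal (RCLike.ofReal ∘ h.eigenvalues)
          * (star h.eigenvectorUnitary : Matrix n n ℂ)).charpoly := by rw [← hsp]
    _ = (Matrix.diagonal (fun i => ((h.eigenvalues i : ℝ) : ℂ))).charpoly := by
        exact Scratch.charpoly_conj _ _ _ hU
    _ = _ := charpoly_diagonal_real _

lemma roots_charpoly_hermitian {M : Matrix n n ℂ} (h : M.IsHermitian) :
    M.charpoly.roots = Finset.univ.val.map (fun i => ((h.eigenvalues i : ℝ) : ℂ)) := by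
  rw [charpoly_hermitian h]
  rw [← Polynomial.roots_multiset_prod_X_sub_C (Finset.univ.val.map
    (fun i => ((h.eigenvalues i : ℝ) : ℂ)))]
  congr 1
  rw [Multiset.map_map, Finset.prod_eq_multiset_prod]
  rfl

/-- master: sum of g over eigenvalues equals sum over charpoly roots -/
lemma sum_g_eig {M : Matrix n n ℂ} (h : M.IsHermitian) (g : ℝ → ℝ) :
    ∑ i, g (h.eigenvalues i) = (M.charpoly.roots.map (fun z => g z.re)).sum := by
  rw [roots_charpoly_hermitian h, Multiset.map_map, Finset.sum_eq_multiset_sum]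
  congr 1

lemma entropy_eq_rootSum {M : Matrix n n ℂ} (h : M.IsHermitian) :
    entropy M = (M.charpoly.roots.map (fun z => Real.negMulLog z.re)).sum := by
  rw [entropy, dif_pos h]; exact sum_g_eig h _

/-- if charpoly is a product of linear factors with real roots d, entropy = Σ negMulLog d -/
lemma entropy_eq_of_charpoly {M : Matrix n n ℂ} (h : M.IsHermitian) {ι : Type*} [Fintype ι]
    (d : ι → ℝ) (hc : M.charpoly = ∏ i, (Polynomial.X - Polynomial.C ((d i : ℝ) : ℂ))) :
    entropy M = ∑ i, Real.negMulLog (d i) := by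
  rw [entropy_eq_rootSum h, hc]
  rw [show (∏ i, (Polynomial.X - Polynomial.C ((d i : ℝ) : ℂ)))
      = ((Finset.univ.val.map (fun i => ((d i : ℝ) : ℂ))).map
          (fun a => Polynomial.X - Polynomial.C a)).prod by
    rw [Multiset.map_map, Finset.prod_eq_multiset_prod]; rfl]
  rw [Polynomial.roots_multiset_prod_X_sub_C, Multiset.map_map, Finset.sum_eq_multiset_sum]
  congr 1

end Scratch2

namespace Scratch2

variable {n m : Type*} [Fintype n] [DecidableEq n] [Fintype m] [DecidableEq m]

lemma diag_herm (d : n → ℝ) :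
    (Matrix.diagonal (fun i => (d i : ℂ))).IsHermitian := by
  rw [Matrix.isHermitian_diagonal_iff]
  intro i
  exact (Complex.conj_ofReal (d i) : star ((d i : ℝ) : ℂ) = _)

lemma isHermitian_unitary_diag (V : Matrix n n ℂ) (d : n → ℝ) :
    (V * Matrix.diagonal (fun i => (d i : ℂ)) * star V).IsHermitian := by
  rw [Matrix.star_eq_conjTranspose]
  exact Matrix.isHermitian_mul_mul_conjTranspose V (diag_herm d)

lemma entropy_unitary_diag (V : Matrix n n ℂ) (hV : V ∈ Matrix.unitaryGroup n ℂ)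
    (d : n → ℝ) :
    entropy (V * Matrix.diagonal (fun i => (d i : ℂ)) * star V) = ∑ i, Real.negMulLog (d i) := by
  refine entropy_eq_of_charpoly (isHermitian_unitary_diag V d) d ?_
  rw [Scratch.charpoly_conj V (star V) _ (Matrix.mem_unitaryGroup_iff.mp hV)]
  exact charpoly_diagonal_real d

lemma entropy_diagonal (d : n → ℝ) :
    entropy (Matrix.diagonal (fun i => (d i : ℂ))) = ∑ i, Real.negMulLog (d i) := by
  have h1 : (1 : Matrix n n ℂ) ∈ Matrix.unitaryGroup n ℂ := Submonoid.one_mem _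
  have := entropy_unitary_diag 1 h1 d
  rwa [Matrix.one_mul, star_one, Matrix.mul_one] at this

lemma entropy_reindex (e : n ≃ m) {M : Matrix n n ℂ} (h : M.IsHermitian) :
    entropy (Matrix.reindex e e M) = entropy M := by
  have h2 : (Matrix.reindex e e M).IsHermitian := by
    rw [Matrix.IsHermitian] at h ⊢
    rw [Matrix.reindex_apply, Matrix.conjTranspose_submatrix, h]
  rw [entropy_eq_rootSum h, entropy_eq_rootSum h2, Matrix.charpoly_reindex]

lemma isHermitian_blockDiagonal {K : Type*} [Fintype K] [DecidableEq K]
    (σ : K → Matrix n n ℂ) (hσ : ∀ k, (σ k).IsHermitian) :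
    (Matrix.blockDiagonal σ).IsHermitian := by
  rw [Matrix.IsHermitian, Matrix.blockDiagonal_conjTranspose]
  exact congrArg _ (funext fun k => hσ k)

lemma entropy_blockDiagonal {K : Type*} [Fintype K] [DecidableEq K]
    (σ : K → Matrix n n ℂ) (hσ : ∀ k, (σ k).IsHermitian) :
    entropy (Matrix.blockDiagonal σ) = ∑ k, entropy (σ k) := by
  have hH := isHermitian_blockDiagonal σ hσ
  have hcm : charmatrix (Matrix.blockDiagonal σ)
      = Matrix.blockDiagonal (fun k => charmatrix (σ k)) := by
    ext ⟨i, k⟩ ⟨j, k'⟩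
    by_cases hkk : k = k'
    · subst hkk
      by_cases hij : i = j
      · subst hij
        simp [Matrix.blockDiagonal_apply_eq]
      · simp [charmatrix_apply, Matrix.blockDiagonal_apply_eq,
          Matrix.diagonal_apply, hij, Prod.ext_iff]
    · simp [charmatrix_apply, Matrix.blockDiagonal_apply_ne _ _ _ hkk,
        Matrix.diagonal_apply, Prod.ext_iff, hkk]
  have hchar : (Matrix.blockDiagonal σ).charpoly
      = ∏ kb : n × K, (Polynomial.X
          - Polynomial.C (((hσ kb.2).eigenvalues kb.1 : ℝ) : ℂ)) := by
    rw [Matrix.charpoly, hcm, Matrix.det_blockDiagonal]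
    calc ∏ k, (charmatrix (σ k)).det
        = ∏ k, ∏ b, (Polynomial.X - Polynomial.C (((hσ k).eigenvalues b : ℝ) : ℂ)) :=
          Finset.prod_congr rfl fun k _ => charpoly_hermitian (hσ k)
      _ = ∏ b, ∏ k, (Polynomial.X - Polynomial.C (((hσ k).eigenvalues b : ℝ) : ℂ)) :=
          Finset.prod_comm
      _ = _ := by rw [Fintype.prod_prod_type]
  rw [entropy_eq_of_charpoly hH _ hchar]
  rw [Fintype.sum_prod_type_right]
  exact Finset.sum_congr rfl fun k _ => by
    rw [entropy, dif_pos (hσ k)]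

lemma trace_eq_sum_eig {M : Matrix n n ℂ} (h : M.IsHermitian) :
    M.trace = ∑ i, ((h.eigenvalues i : ℝ) : ℂ) := by
  conv_lhs => rw [h.spectral_theorem, Unitary.conjStarAlgAut_apply]
  rw [Matrix.trace_mul_cycle]
  rw [show (star h.eigenvectorUnitary : Matrix n n ℂ) * (h.eigenvectorUnitary : Matrix n n ℂ)
      = 1 from Matrix.mem_unitaryGroup_iff'.mp h.eigenvectorUnitary.2]
  rw [Matrix.one_mul, Matrix.trace_diagonal]
  rfl

lemma posSemidef_smul {M : Matrix n n ℂ} (h : M.PosSemidef) {c : ℝ} (hc : 0 ≤ c) :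
    ((c : ℂ) • M).PosSemidef := by
  rw [Matrix.posSemidef_iff_dotProduct_mulVec]
  constructor
  · have hH := h.1
    rw [Matrix.IsHermitian] at hH ⊢
    rw [Matrix.conjTranspose_smul, hH]
    congr 1
    simp
  · intro v
    have := h.dotProduct_mulVec_nonneg v
    rw [Matrix.smul_mulVec, dotProduct_smul]
    rw [smul_eq_mul]
    have h0 : (0:ℂ) ≤ (c:ℂ) := by
      rw [Complex.le_def]; constructor <;> simp [hc]
    calc (0:ℂ) = (c:ℂ) * 0 := by ring
      _ ≤ (c:ℂ) * (dotProduct (star v) (M.mulVec v)) := by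
          exact mul_le_mul_of_nonneg_left this h0

lemma entropy_smul {M : Matrix n n ℂ} (h : M.PosSemidef) {c : ℝ} (hc : 0 ≤ c) :
    entropy ((c : ℂ) • M) = Real.negMulLog c * (M.trace).re + c * entropy M := by
  have hH := h.1
  have key : (c : ℂ) • M = (hH.eigenvectorUnitary : Matrix n n ℂ)
      * Matrix.diagonal (fun i => ((c * hH.eigenvalues i : ℝ) : ℂ))
      * (star hH.eigenvectorUnitary : Matrix n n ℂ) := by
    conv_lhs => rw [hH.spectral_theorem, Unitary.conjStarAlgAut_apply]
    rw [← Matrix.smul_mul, ← Matrix.mul_smul]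
    congr 2
    ext i j
    by_cases hij : i = j
    · subst hij
      simp [Matrix.diagonal_apply_eq, Function.comp]
    · simp [Matrix.diagonal_apply_ne _ hij]
  rw [key, entropy_unitary_diag _ hH.eigenvectorUnitary.2]
  have htr : (M.trace).re = ∑ i, hH.eigenvalues i := by
    rw [trace_eq_sum_eig hH]
    rw [show (∑ i, ((hH.eigenvalues i : ℝ) : ℂ)) = ((∑ i, hH.eigenvalues i : ℝ) : ℂ) by
      push_cast; ring]
    exact Complex.ofReal_re _
  rw [htr, entropy, dif_pos hH, Finset.mul_sum, Finset.mul_sum, ← Finset.sum_add_distrib]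
  exact Finset.sum_congr rfl fun i _ => by
    rw [Real.negMulLog_mul]; ring

end Scratch2

namespace Scratch3

open Real Complex

lemma concave_nml : ConcaveOn ℝ (Set.Ici (0:ℝ)) Real.negMulLog :=
  Real.strictConcaveOn_negMulLog.concaveOn

lemma jensen_sub {ι : Type*} [Fintype ι] (w x : ι → ℝ) (hw : ∀ i, 0 ≤ w i)
    (hx : ∀ i, 0 ≤ x i) (hs : ∑ i, w i ≤ 1) :
    ∑ i, w i * Real.negMulLog (x i) ≤ Real.negMulLog (∑ i, w i * x i) := by
  classical
  set w' : Option ι → ℝ := fun o => o.elim (1 - ∑ i, w i) w with hw'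
  set x' : Option ι → ℝ := fun o => o.elim 0 x with hx'
  have h₀ : ∀ o ∈ Finset.univ, 0 ≤ w' o := by
    rintro (_|i) _
    · simpa [w'] using hs
    · exact hw i
  have h₁ : ∑ o, w' o = 1 := by
    rw [Fintype.sum_option]
    simp [w']
  have hmem : ∀ o ∈ Finset.univ, x' o ∈ Set.Ici (0:ℝ) := by
    rintro (_|i) _
    · simp [x']
    · simpa [x'] using hx i
  have := concave_nml.le_map_sum h₀ h₁ hmem
  rw [Fintype.sum_option, Fintype.sum_option] at this
  simpa [w', x', smul_eq_mul, Real.negMulLog_zero] using this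

/-- diagonal entries of a gram-identity family are ≤ 1 (projection diagonal bound) -/
lemma proj_diag_le_one {K J : Type*} [Fintype K] [Fintype J] [DecidableEq J] (t : K → J → ℂ)
    (h : ∀ j j', ∑ k, (starRingEnd ℂ) (t k j) * t k j' = if j = j' then 1 else 0) (k : K) :
    ∑ j, Complex.normSq (t k j) ≤ 1 := by
  classical
  set P : K → K → ℂ := fun k l => ∑ j, t k j * (starRingEnd ℂ) (t l j) with hP
  have hidem : ∀ k k', ∑ l, P k l * P l k' = P k k' := by
    intro k k'
    calc ∑ l, P k l * P l k'
        = ∑ l, ∑ j, ∑ j', (t k j * (starRingEnd ℂ) (t l j)) * (t l j' * (starRingEnd ℂ) (t k' j')) := by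
          refine Finset.sum_congr rfl fun l _ => ?_
          rw [hP, Finset.sum_mul_sum]
      _ = ∑ j, ∑ j', (t k j * (starRingEnd ℂ) (t k' j')) *
            ∑ l, (starRingEnd ℂ) (t l j) * t l j' := by
          rw [Finset.sum_comm]
          refine Finset.sum_congr rfl fun j _ => ?_
          rw [Finset.sum_comm]
          refine Finset.sum_congr rfl fun j' _ => ?_
          rw [Finset.mul_sum]
          refine Finset.sum_congr rfl fun l _ => by ring
      _ = ∑ j, ∑ j', (t k j * (starRingEnd ℂ) (t k' j')) * (if j = j' then 1 else 0) := by
          refine Finset.sum_congr rfl fun j _ => Finset.sum_congr rfl fun j' _ => by rw [h]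
      _ = P k k' := by
          rw [hP]
          refine Finset.sum_congr rfl fun j _ => ?_
          simp
  have hPkk : P k k = ((∑ j, Complex.normSq (t k j) : ℝ) : ℂ) := by
    rw [hP]
    push_cast
    refine Finset.sum_congr rfl fun j _ => ?_
    rw [Complex.mul_conj]
  have hPsym : ∀ l, P l k = (starRingEnd ℂ) (P k l) := by
    intro l
    rw [hP, map_sum]
    refine Finset.sum_congr rfl fun j _ => ?_
    rw [_root_.map_mul, Complex.conj_conj]
    ring
  have hx : ((∑ j, Complex.normSq (t k j) : ℝ) : ℂ) = ∑ l, (Complex.normSq (P k l) : ℂ) := by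
    rw [← hPkk, ← hidem k k]
    refine Finset.sum_congr rfl fun l _ => ?_
    rw [hPsym l, Complex.mul_conj]
  set x : ℝ := ∑ j, Complex.normSq (t k j) with hxdef
  have hxr : x = ∑ l, Complex.normSq (P k l) := by
    have := congrArg Complex.re hx
    simpa using this
  have hge : x ≥ x ^ 2 := by
    have hterm : Complex.normSq (P k k) ≤ ∑ l, Complex.normSq (P k l) :=
      Finset.single_le_sum (fun l _ => Complex.normSq_nonneg _) (Finset.mem_univ k)
    have : Complex.normSq (P k k) = x ^ 2 := by
      rw [hPkk]
      rw [Complex.normSq_ofReal]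
      ring
    rw [← hxr] at hterm
    rw [this] at hterm
    exact hterm
  nlinarith [hge]

end Scratch3

namespace Scratch3

lemma sub_core {K J : Type*} [Fintype K] [Fintype J] [DecidableEq J]
    (μ : K → ℝ) (hμ : ∀ k, 0 ≤ μ k) (lam : J → ℝ) (hlam : ∀ j, 0 ≤ lam j)
    (a : K → J → ℂ)
    (h1 : ∀ k, ∑ j, Complex.normSq (a k j) = 1)
    (h2 : ∀ j j', ∑ k, (μ k : ℂ) * (starRingEnd ℂ) (a k j) * a k j'
        = if j = j' then (lam j : ℂ) else 0) :
    ∑ j, Real.negMulLog (lam j) ≤ ∑ k, Real.negMulLog (μ k) := by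
  classical
  set r : K → J → ℝ := fun k j => μ k * Complex.normSq (a k j) with hr
  have hrnn : ∀ k j, 0 ≤ r k j := fun k j =>
    mul_nonneg (hμ k) (Complex.normSq_nonneg _)
  have hrow : ∀ k, ∑ j, r k j = μ k := by
    intro k
    rw [hr, ← Finset.mul_sum, h1, mul_one]
  have hcol : ∀ j, ∑ k, r k j = lam j := by
    intro j
    have := h2 j j
    rw [if_pos rfl] at this
    have hre := congrArg Complex.re this
    rw [Complex.ofReal_re] at hre
    rw [← hre, Complex.re_sum]
    refine Finset.sum_congr rfl fun k _ => ?_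
    rw [mul_assoc]
    rw [show (starRingEnd ℂ) (a k j) * a k j = ((Complex.normSq (a k j) : ℝ) : ℂ) by
      rw [mul_comm, Complex.mul_conj]]
    rw [← Complex.ofReal_mul, Complex.ofReal_re]
  have hrzero : ∀ k j, lam j = 0 → r k j = 0 := by
    intro k j h0
    have hsum : ∑ k, r k j = 0 := by rw [hcol j, h0]
    exact (Finset.sum_eq_zero_iff_of_nonneg (fun k _ => hrnn k j)).mp hsum k (Finset.mem_univ k)
  -- positive part
  set Jp := {j : J // 0 < lam j} with hJp
  set t : K → Jp → ℂ := fun k j =>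
    ((Real.sqrt (μ k) : ℝ) : ℂ) * a k j.1 / ((Real.sqrt (lam j.1) : ℝ) : ℂ) with ht
  have hgram : ∀ j j' : Jp, ∑ k, (starRingEnd ℂ) (t k j) * t k j'
      = if j = j' then 1 else 0 := by
    intro j j'
    have hstep : ∀ k, (starRingEnd ℂ) (t k j) * t k j'
        = ((μ k : ℂ) * (starRingEnd ℂ) (a k j.1) * a k j'.1)
          / (((Real.sqrt (lam j.1) : ℝ) : ℂ) * ((Real.sqrt (lam j'.1) : ℝ) : ℂ)) := by
      intro k
      rw [ht]
      simp only [map_div₀, _root_.map_mul, Complex.conj_ofReal]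
      rw [div_mul_div_comm]
      congr 1
      rw [show ((Real.sqrt (μ k) : ℝ) : ℂ) * (starRingEnd ℂ) (a k j.1)
          * (((Real.sqrt (μ k) : ℝ) : ℂ) * a k j'.1)
          = (((Real.sqrt (μ k) : ℝ) : ℂ) * ((Real.sqrt (μ k) : ℝ) : ℂ))
            * (starRingEnd ℂ) (a k j.1) * a k j'.1 from by ring]
      rw [← Complex.ofReal_mul, Real.mul_self_sqrt (hμ k)]
    rw [Finset.sum_congr rfl fun k _ => hstep k, ← Finset.sum_div, h2]
    by_cases hjj : j = j'
    · subst hjj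
      rw [if_pos rfl, if_pos (Subtype.ext_iff.mpr rfl)]
      rw [show ((Real.sqrt (lam j.1) : ℝ) : ℂ) * ((Real.sqrt (lam j.1) : ℝ) : ℂ)
          = ((lam j.1 : ℝ) : ℂ) by
        rw [← Complex.ofReal_mul, Real.mul_self_sqrt (hlam j.1)]]
      rw [div_self]
      exact_mod_cast (ne_of_gt j.2)
    · have hne : j.1 ≠ j'.1 := fun hc => hjj (Subtype.ext hc)
      rw [if_neg hne, if_neg hjj, zero_div]
  have hproj : ∀ k, ∑ j : Jp, Complex.normSq (t k j) ≤ 1 :=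
    fun k => proj_diag_le_one t hgram k
  have hnormSq_t : ∀ k (j : Jp), Complex.normSq (t k j) = r k j.1 / lam j.1 := by
    intro k j
    rw [ht, hr]
    simp only [Complex.normSq_div, Complex.normSq_mul, Complex.normSq_ofReal]
    rw [Real.mul_self_sqrt (hμ k), Real.mul_self_sqrt (hlam j.1)]
  -- Jensen per k
  have hjen : ∀ k, ∑ j : Jp, (r k j.1 / lam j.1) * Real.negMulLog (lam j.1)
      ≤ Real.negMulLog (μ k) := by
    intro k
    have hw : ∀ j : Jp, 0 ≤ r k j.1 / lam j.1 := fun j => div_nonneg (hrnn k j.1) (hlam j.1)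
    have hxp : ∀ j : Jp, 0 ≤ lam j.1 := fun j => hlam j.1
    have hs : ∑ j : Jp, r k j.1 / lam j.1 ≤ 1 := by
      rw [show ∑ j : Jp, r k j.1 / lam j.1 = ∑ j : Jp, Complex.normSq (t k j) from
        Finset.sum_congr rfl fun j _ => (hnormSq_t k j).symm]
      exact hproj k
    have := jensen_sub (fun j : Jp => r k j.1 / lam j.1) (fun j : Jp => lam j.1) hw hxp hs
    have harg : ∑ j : Jp, (r k j.1 / lam j.1) * lam j.1 = μ k := by
      have e1 : ∑ j : Jp, (r k j.1 / lam j.1) * lam j.1 = ∑ j : Jp, r k j.1 :=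
        Finset.sum_congr rfl fun j _ => div_mul_cancel₀ _ (ne_of_gt j.2)
      have e2 : ∑ j : Jp, r k j.1
          = ∑ j ∈ Finset.univ.filter (fun j => 0 < lam j), r k j :=
        (Finset.sum_subtype _ (fun j => by simp) _).symm
      have e3 : ∑ j ∈ Finset.univ.filter (fun j => 0 < lam j), r k j = ∑ j, r k j :=
        Finset.sum_subset (Finset.filter_subset _ _) (fun j _ hj => by
          have hnl : ¬ (0 < lam j) := fun hc =>
            hj (Finset.mem_filter.mpr ⟨Finset.mem_univ _, hc⟩)
          exact hrzero k j (le_antisymm (not_lt.mp hnl) (hlam j)))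
      rw [e1, e2, e3, hrow k]
    simpa only [harg] using this
  have swap : ∑ k, ∑ j : Jp, (r k j.1 / lam j.1) * Real.negMulLog (lam j.1)
      = ∑ j : Jp, Real.negMulLog (lam j.1) := by
    rw [Finset.sum_comm]
    refine Finset.sum_congr rfl fun j _ => ?_
    rw [← Finset.sum_mul, ← Finset.sum_div, hcol j.1, div_self (ne_of_gt j.2), one_mul]
  have hfull : ∑ j : J, Real.negMulLog (lam j) = ∑ j : Jp, Real.negMulLog (lam j.1) := by
    rw [← Finset.sum_subtype (Finset.univ.filter fun j => 0 < lam j) (fun j => by simp)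
      (fun j => Real.negMulLog (lam j))]
    refine (Finset.sum_subset (Finset.filter_subset _ _) (fun j _ hj => by
      have hnl : ¬ (0 < lam j) := fun hc =>
        hj (Finset.mem_filter.mpr ⟨Finset.mem_univ _, hc⟩)
      rw [show lam j = 0 from le_antisymm (not_lt.mp hnl) (hlam j), Real.negMulLog_zero])).symm
  calc ∑ j : J, Real.negMulLog (lam j) = ∑ j : Jp, Real.negMulLog (lam j.1) := hfull
    _ = ∑ k, ∑ j : Jp, (r k j.1 / lam j.1) * Real.negMulLog (lam j.1) := swap.symm
    _ ≤ ∑ k, Real.negMulLog (μ k) := Finset.sum_le_sum fun k _ => hjen k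

end Scratch3

namespace Scratch4
open Scratch2 Scratch3

variable {n : Type*} [Fintype n] [DecidableEq n]

lemma posSemidef_sum {K : Type*} [Fintype K] (σ : K → Matrix n n ℂ)
    (hσ : ∀ k, (σ k).PosSemidef) : (∑ k, σ k).PosSemidef :=
  Finset.sum_induction σ Matrix.PosSemidef (fun _ _ ha hb => ha.add hb)
    Matrix.PosSemidef.zero (fun k _ => hσ k)

lemma unit_mul_star {V : Matrix n n ℂ} (hV : V ∈ Matrix.unitaryGroup n ℂ) :
    V * star V = 1 := Matrix.mem_unitaryGroup_iff.mp hV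

lemma star_mul_unit {V : Matrix n n ℂ} (hV : V ∈ Matrix.unitaryGroup n ℂ) :
    star V * V = 1 := Matrix.mem_unitaryGroup_iff'.mp hV

lemma row_normSq_one {W : Matrix n n ℂ} (hW : W * star W = 1) (b : n) :
    ∑ j, Complex.normSq (W b j) = 1 := by
  have h := congrFun (congrFun (congrArg (fun M : Matrix n n ℂ => (M : n → n → ℂ)) hW) b) b
  simp only [Matrix.mul_apply, Matrix.one_apply_eq] at h
  have h2 : ∑ j, ((Complex.normSq (W b j) : ℝ) : ℂ) = 1 := by
    rw [← h]
    refine Finset.sum_congr rfl fun j _ => ?_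
    rw [Matrix.star_apply, Complex.star_def, Complex.mul_conj]
  have h3 := congrArg Complex.re h2
  rw [Complex.re_sum] at h3
  simp only [Complex.ofReal_re] at h3
  simpa using h3

lemma col_normSq_one {W : Matrix n n ℂ} (hW : star W * W = 1) (j : n) :
    ∑ b, Complex.normSq (W b j) = 1 := by
  have h := congrFun (congrFun (congrArg (fun M : Matrix n n ℂ => (M : n → n → ℂ)) hW) j) j
  simp only [Matrix.mul_apply, Matrix.one_apply_eq] at h
  have h2 : ∑ b, ((Complex.normSq (W b j) : ℝ) : ℂ) = 1 := by
    rw [← h]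
    refine Finset.sum_congr rfl fun b _ => ?_
    rw [Matrix.star_apply, Complex.star_def, mul_comm, Complex.mul_conj]
  have h3 := congrArg Complex.re h2
  rw [Complex.re_sum] at h3
  simp only [Complex.ofReal_re] at h3
  simpa using h3

/-- conjugated entry formula: (star V * M * V) j j' as a sum over eigen-data of M -/
lemma conj_entry {M : Matrix n n ℂ} (hM : M.IsHermitian) (V : Matrix n n ℂ)
    (j j' : n) :
    (star V * M * V) j j'
      = ∑ b, (hM.eigenvalues b : ℂ)
          * (starRingEnd ℂ) ((star (hM.eigenvectorUnitary : Matrix n n ℂ) * V) b j)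
          * ((star (hM.eigenvectorUnitary : Matrix n n ℂ) * V) b j') := by
  set U : Matrix n n ℂ := (hM.eigenvectorUnitary : Matrix n n ℂ) with hU
  set W : Matrix n n ℂ := star U * V with hW
  have hsp : star V * M * V = star W * (Matrix.diagonal (RCLike.ofReal ∘ hM.eigenvalues) * W) := by
    conv_lhs => rw [hM.spectral_theorem, Unitary.conjStarAlgAut_apply]
    rw [hW, Matrix.star_mul, star_star]
    rw [Matrix.mul_assoc, Matrix.mul_assoc, Matrix.mul_assoc, Matrix.mul_assoc]
  rw [hsp, Matrix.mul_apply]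
  refine Finset.sum_congr rfl fun b _ => ?_
  rw [Matrix.diagonal_mul, Matrix.star_apply, Complex.star_def]
  show (starRingEnd ℂ) ((star U * V) b j) * ((hM.eigenvalues b : ℂ) * W b j') = _
  rw [hW]
  ring

end Scratch4

namespace Scratch4

variable {n : Type*} [Fintype n] [DecidableEq n]

lemma entropy_sum_le {K : Type*} [Fintype K] (σ : K → Matrix n n ℂ)
    (hσ : ∀ k, (σ k).PosSemidef) :
    entropy (∑ k, σ k) ≤ ∑ k, entropy (σ k) := by
  classical
  have hS : (∑ k, σ k).PosSemidef := posSemidef_sum σ hσ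
  have hH : (∑ k, σ k).IsHermitian := hS.1
  set V : Matrix n n ℂ := (hH.eigenvectorUnitary : Matrix n n ℂ) with hVdef
  set lam : n → ℝ := hH.eigenvalues with hlamdef
  set W : K → Matrix n n ℂ :=
    fun k => star ((hσ k).1.eigenvectorUnitary : Matrix n n ℂ) * V with hWdef
  have hWunit : ∀ k, W k * star (W k) = 1 := by
    intro k
    set U : Matrix n n ℂ := ((hσ k).1.eigenvectorUnitary : Matrix n n ℂ)
    have : W k * star (W k) = star U * (V * star V) * U := by
      rw [hWdef]
      simp only [Matrix.star_mul, star_star]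
      rw [Matrix.mul_assoc, Matrix.mul_assoc, Matrix.mul_assoc]
    rw [this, unit_mul_star hH.eigenvectorUnitary.2, Matrix.mul_one,
      star_mul_unit (hσ k).1.eigenvectorUnitary.2]
  -- data for sub_core
  set μ' : (K × n) → ℝ := fun kb => (hσ kb.1).1.eigenvalues kb.2 with hμ'
  set a : (K × n) → n → ℂ := fun kb j => W kb.1 kb.2 j with ha
  have h1 : ∀ kb : K × n, ∑ j, Complex.normSq (a kb j) = 1 :=
    fun kb => row_normSq_one (hWunit kb.1) kb.2
  have hdiag : star V * (∑ k, σ k) * V = Matrix.diagonal (fun j => (lam j : ℂ)) := by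
    conv_lhs => rw [hH.spectral_theorem, Unitary.conjStarAlgAut_apply]
    rw [← hVdef, ← Matrix.mul_assoc, ← Matrix.mul_assoc,
      star_mul_unit hH.eigenvectorUnitary.2, Matrix.one_mul, Matrix.mul_assoc,
      star_mul_unit hH.eigenvectorUnitary.2, Matrix.mul_one]
    rfl
  have h2 : ∀ j j', ∑ kb : K × n, (μ' kb : ℂ) * (starRingEnd ℂ) (a kb j) * a kb j'
      = if j = j' then (lam j : ℂ) else 0 := by
    intro j j'
    rw [Fintype.sum_prod_type]
    have hk : ∀ k, ∑ b, (μ' (k, b) : ℂ) * (starRingEnd ℂ) (a (k, b) j) * a (k, b) j'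
        = (star V * σ k * V) j j' := fun k => (conj_entry (hσ k).1 V j j').symm
    rw [Finset.sum_congr rfl fun k _ => hk k]
    have hsum : star V * (∑ k, σ k) * V = ∑ k, star V * σ k * V := by
      rw [Finset.mul_sum, Finset.sum_mul]
    have : ∑ k, (star V * σ k * V) j j' = (star V * (∑ k, σ k) * V) j j' := by
      rw [hsum]
      exact (Matrix.sum_apply j j' Finset.univ _).symm
    rw [this, hdiag, Matrix.diagonal_apply]
  have hmain := Scratch3.sub_core μ' (fun kb => (hσ kb.1).eigenvalues_nonneg kb.2)
    lam (fun j => hS.eigenvalues_nonneg j) a h1 h2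
  rw [entropy, dif_pos hH]
  calc ∑ i, Real.negMulLog (hH.eigenvalues i) ≤ ∑ kb : K × n, Real.negMulLog (μ' kb) := hmain
    _ = ∑ k, entropy (σ k) := by
        rw [Fintype.sum_prod_type]
        exact Finset.sum_congr rfl fun k _ => by rw [entropy, dif_pos (hσ k).1]

end Scratch4

namespace Scratch5
open Scratch2 Scratch3 Scratch4

lemma subadd {K J : Type*} [Fintype K] [Fintype J] (c : K → J → ℝ)
    (hc : ∀ k j, 0 ≤ c k j) (htot : ∑ k, ∑ j, c k j = 1) :
    ∑ k, ∑ j, Real.negMulLog (c k j)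
      ≤ (∑ k, Real.negMulLog (∑ j, c k j)) + ∑ j, Real.negMulLog (∑ k, c k j) := by
  classical
  set q : K → ℝ := fun k => ∑ j, c k j with hq
  set lam : J → ℝ := fun j => ∑ k, c k j with hlam
  have hqnn : ∀ k, 0 ≤ q k := fun k => Finset.sum_nonneg fun j _ => hc k j
  have hlnn : ∀ j, 0 ≤ lam j := fun j => Finset.sum_nonneg fun k _ => hc k j
  have hsq : ∑ k, q k = 1 := htot
  have hsl : ∑ j, lam j = 1 := by
    rw [hlam]
    rw [Finset.sum_comm]
    exact htot
  have hterm : ∀ k j, Real.negMulLog (c k j) + c k j * Real.log (q k)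
      + c k j * Real.log (lam j) ≤ q k * lam j - c k j := by
    intro k j
    rcases eq_or_lt_of_le (hc k j) with h0 | hpos
    · rw [← h0]
      simp [Real.negMulLog_zero]
      exact mul_nonneg (hqnn k) (hlnn j)
    · have hqpos : 0 < q k := lt_of_lt_of_le hpos
        (Finset.single_le_sum (fun j' _ => hc k j') (Finset.mem_univ j))
      have hlpos : 0 < lam j := lt_of_lt_of_le hpos
        (Finset.single_le_sum (fun k' _ => hc k' j) (Finset.mem_univ k))
      have hlog : Real.log (q k * lam j / c k j) ≤ q k * lam j / c k j - 1 :=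
        Real.log_le_sub_one_of_pos (by positivity)
      have hexp : Real.log (q k * lam j / c k j)
          = Real.log (q k) + Real.log (lam j) - Real.log (c k j) := by
        rw [Real.log_div (by positivity) (ne_of_gt hpos),
          Real.log_mul (ne_of_gt hqpos) (ne_of_gt hlpos)]
      rw [hexp] at hlog
      have h5 := mul_le_mul_of_nonneg_left hlog (le_of_lt hpos)
      have h6 : c k j * (q k * lam j / c k j - 1) = q k * lam j - c k j := by
        field_simp
      rw [h6] at h5
      simp only [Real.negMulLog, neg_mul]
      nlinarith [h5]
  have hsum : ∑ k, ∑ j, (Real.negMulLog (c k j) + c k j * Real.log (q k)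
      + c k j * Real.log (lam j)) ≤ ∑ k, ∑ j, (q k * lam j - c k j) :=
    Finset.sum_le_sum fun k _ => Finset.sum_le_sum fun j _ => hterm k j
  have hrhs : ∑ k, ∑ j, (q k * lam j - c k j) = 0 := by
    have h1 : ∀ k, ∑ j, (q k * lam j - c k j) = q k * (∑ j, lam j) - q k := by
      intro k
      rw [Finset.sum_sub_distrib, ← Finset.mul_sum]
    rw [Finset.sum_congr rfl fun k _ => h1 k, hsl]
    simp
  have hl1 : ∀ k, ∑ j, c k j * Real.log (q k) = -(Real.negMulLog (q k)) := by
    intro k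
    rw [← Finset.sum_mul]
    rw [show (∑ j, c k j) = q k from rfl]
    rw [Real.negMulLog, neg_mul, neg_neg]
  have hl2 : ∑ k, ∑ j, c k j * Real.log (lam j) = -(∑ j, Real.negMulLog (lam j)) := by
    rw [Finset.sum_comm]
    have h1 : ∀ j, ∑ k, c k j * Real.log (lam j) = lam j * Real.log (lam j) := by
      intro j
      rw [← Finset.sum_mul]
    rw [Finset.sum_congr rfl fun j _ => h1 j]
    rw [← Finset.sum_neg_distrib]
    exact Finset.sum_congr rfl fun j _ => by rw [Real.negMulLog, neg_mul, neg_neg]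
  have hexpand : ∑ k, ∑ j, (Real.negMulLog (c k j) + c k j * Real.log (q k)
      + c k j * Real.log (lam j))
      = (∑ k, ∑ j, Real.negMulLog (c k j)) - (∑ k, Real.negMulLog (q k))
        - (∑ j, Real.negMulLog (lam j)) := by
    have h1 : ∀ k, ∑ j, (Real.negMulLog (c k j) + c k j * Real.log (q k)
        + c k j * Real.log (lam j))
        = (∑ j, Real.negMulLog (c k j)) - Real.negMulLog (q k)
          + ∑ j, c k j * Real.log (lam j) := by
      intro k
      rw [Finset.sum_add_distrib, Finset.sum_add_distrib, hl1 k]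
      ring
    rw [Finset.sum_congr rfl fun k _ => h1 k, Finset.sum_add_distrib, hl2,
      Finset.sum_sub_distrib]
    ring
  rw [hexpand, hrhs] at hsum
  linarith
end Scratch5

namespace Scratch5
open Scratch2 Scratch3 Scratch4

variable {n : Type*} [Fintype n] [DecidableEq n]

lemma entropy_conc {K : Type*} [Fintype K] (σ : K → Matrix n n ℂ)
    (hσ : ∀ k, (σ k).PosSemidef) (htr : ∑ k, ((σ k).trace).re = 1) :
    ∑ k, entropy (σ k)
      ≤ entropy (∑ k, σ k) + ∑ k, Real.negMulLog (((σ k).trace).re) := by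
  classical
  have hS : (∑ k, σ k).PosSemidef := posSemidef_sum σ hσ
  have hH : (∑ k, σ k).IsHermitian := hS.1
  set V : Matrix n n ℂ := (hH.eigenvectorUnitary : Matrix n n ℂ) with hVdef
  set lam : n → ℝ := hH.eigenvalues with hlamdef
  set W : K → Matrix n n ℂ :=
    fun k => star ((hσ k).1.eigenvectorUnitary : Matrix n n ℂ) * V with hWdef
  set μ : K → n → ℝ := fun k => (hσ k).1.eigenvalues with hμdef
  have hWunit : ∀ k, W k * star (W k) = 1 := by
    intro k
    set U : Matrix n n ℂ := ((hσ k).1.eigenvectorUnitary : Matrix n n ℂ)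
    have : W k * star (W k) = star U * (V * star V) * U := by
      rw [hWdef]
      simp only [Matrix.star_mul, star_star]
      rw [Matrix.mul_assoc, Matrix.mul_assoc, Matrix.mul_assoc]
    rw [this, unit_mul_star hH.eigenvectorUnitary.2, Matrix.mul_one,
      star_mul_unit (hσ k).1.eigenvectorUnitary.2]
  have hWunit' : ∀ k, star (W k) * W k = 1 :=
    fun k => mul_eq_one_comm.mp (hWunit k)
  set c : K → n → ℝ := fun k j => ∑ b, μ k b * Complex.normSq (W k b j) with hcdef
  have hcnn : ∀ k j, 0 ≤ c k j := fun k j => Finset.sum_nonneg fun b _ =>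
    mul_nonneg ((hσ k).eigenvalues_nonneg b) (Complex.normSq_nonneg _)
  -- row sums: trace
  have htr_eig : ∀ k, ((σ k).trace).re = ∑ b, μ k b := by
    intro k
    rw [trace_eq_sum_eig (hσ k).1]
    rw [show (∑ i, (((hσ k).1.eigenvalues i : ℝ) : ℂ)) = ((∑ i, μ k i : ℝ) : ℂ) by
      push_cast; rfl]
    exact Complex.ofReal_re _
  have hrow : ∀ k, ∑ j, c k j = ((σ k).trace).re := by
    intro k
    rw [htr_eig k, hcdef]
    rw [Finset.sum_comm]
    refine Finset.sum_congr rfl fun b _ => ?_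
    rw [← Finset.mul_sum, row_normSq_one (hWunit k) b, mul_one]
  -- column sums: lam
  have hdiag : star V * (∑ k, σ k) * V = Matrix.diagonal (fun j => (lam j : ℂ)) := by
    conv_lhs => rw [hH.spectral_theorem, Unitary.conjStarAlgAut_apply]
    rw [← hVdef, ← Matrix.mul_assoc, ← Matrix.mul_assoc,
      star_mul_unit hH.eigenvectorUnitary.2, Matrix.one_mul, Matrix.mul_assoc,
      star_mul_unit hH.eigenvectorUnitary.2, Matrix.mul_one]
    rfl
  have hentry : ∀ k j, (star V * σ k * V) j j = ((c k j : ℝ) : ℂ) := by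
    intro k j
    rw [conj_entry (hσ k).1 V j j, hcdef]
    push_cast
    refine Finset.sum_congr rfl fun b _ => ?_
    rw [show ((hσ k).1.eigenvalues b : ℂ) * (starRingEnd ℂ) (W k b j) * W k b j
        = ((hσ k).1.eigenvalues b : ℂ) * ((starRingEnd ℂ) (W k b j) * W k b j) from by ring]
    rw [show (starRingEnd ℂ) (W k b j) * W k b j = ((Complex.normSq (W k b j) : ℝ) : ℂ) from by
      rw [mul_comm, Complex.mul_conj]]
  have hcol : ∀ j, ∑ k, c k j = lam j := by
    intro j
    have h1 : ∑ k, (star V * σ k * V) j j = (star V * (∑ k, σ k) * V) j j := by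
      rw [show star V * (∑ k, σ k) * V = ∑ k, star V * σ k * V from by
        rw [Finset.mul_sum, Finset.sum_mul]]
      exact (Matrix.sum_apply j j Finset.univ _).symm
    rw [Finset.sum_congr rfl fun k _ => hentry k j] at h1
    rw [hdiag, Matrix.diagonal_apply_eq] at h1
    have := congrArg Complex.re h1
    rw [Complex.re_sum] at this
    simp only [Complex.ofReal_re] at this
    simpa using this
  -- pinching step per k
  have hpinch : ∀ k, entropy (σ k) ≤ ∑ j, Real.negMulLog (c k j) := by
    intro k
    rw [entropy, dif_pos (hσ k).1]
    have hjen : ∀ j, ∑ b, Complex.normSq (W k b j) * Real.negMulLog (μ k b)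
        ≤ Real.negMulLog (c k j) := by
      intro j
      have := jensen_sub (fun b => Complex.normSq (W k b j)) (fun b => μ k b)
        (fun b => Complex.normSq_nonneg _) (fun b => (hσ k).eigenvalues_nonneg b)
        (le_of_eq (col_normSq_one (hWunit' k) j))
      rw [show ∑ b, Complex.normSq (W k b j) * μ k b = c k j from by
        rw [hcdef]; exact Finset.sum_congr rfl fun b _ => mul_comm _ _] at this
      exact this
    calc ∑ b, Real.negMulLog ((hσ k).1.eigenvalues b)
        = ∑ b, (∑ j, Complex.normSq (W k b j)) * Real.negMulLog (μ k b) := by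
          refine Finset.sum_congr rfl fun b _ => ?_
          rw [row_normSq_one (hWunit k) b, one_mul]
      _ = ∑ j, ∑ b, Complex.normSq (W k b j) * Real.negMulLog (μ k b) := by
          rw [Finset.sum_comm]
          exact Finset.sum_congr rfl fun b _ => by rw [Finset.sum_mul]
      _ ≤ ∑ j, Real.negMulLog (c k j) := Finset.sum_le_sum fun j _ => hjen j
  -- combine
  have hsubadd := subadd c hcnn (by
    rw [Finset.sum_congr rfl fun k _ => hrow k]
    exact htr)
  have hlam_ent : ∑ j, Real.negMulLog (∑ k, c k j) = entropy (∑ k, σ k) := by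
    rw [entropy, dif_pos hH]
    exact Finset.sum_congr rfl fun j _ => by rw [hcol j]
  calc ∑ k, entropy (σ k) ≤ ∑ k, ∑ j, Real.negMulLog (c k j) :=
        Finset.sum_le_sum fun k _ => hpinch k
    _ ≤ (∑ k, Real.negMulLog (∑ j, c k j)) + ∑ j, Real.negMulLog (∑ k, c k j) := hsubadd
    _ = _ := by
        rw [hlam_ent]
        rw [Finset.sum_congr rfl fun k _ => by rw [hrow k]]
        ring
end Scratch5


lemma entropy_nonneg_aux {n : Type*} [Fintype n] [DecidableEq n] {M : Matrix n n ℂ}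
    (h : M.PosSemidef) (htr : (M.trace).re = 1) : 0 ≤ entropy M := by
  rw [entropy, dif_pos h.1]
  have hsum : ∑ i, h.1.eigenvalues i = 1 := by
    rw [← htr, Scratch2.trace_eq_sum_eig h.1]
    rw [show (∑ i, ((h.1.eigenvalues i : ℝ) : ℂ)) = ((∑ i, h.1.eigenvalues i : ℝ) : ℂ) by
      push_cast; rfl]
    rw [Complex.ofReal_re]
  refine Finset.sum_nonneg fun i _ => Real.negMulLog_nonneg (h.eigenvalues_nonneg i) ?_
  rw [← hsum]
  exact Finset.single_le_sum (fun j _ => h.eigenvalues_nonneg j) (Finset.mem_univ i)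

/-- For a tripartite state classical on AX,
S(AX) + S(BX) − S(ABX) − S(X) ≤ min{S(A), S(B)}. -/
theorem tripartite_entropy_bound_classical_AX
    (p : A × X → ℝ) (hp : ∀ ax, 0 ≤ p ax) (hpsum : ∑ ax, p ax = 1)
    (ρB : A → X → Matrix B B ℂ)
    (hρB : ∀ a x, (ρB a x).PosSemidef ∧ (ρB a x).trace = 1)
    (ρ : Matrix (A × B × X) (A × B × X) ℂ)
    (hρ : ρ = Matrix.of fun i j =>
      if i.1 = j.1 ∧ i.2.2 = j.2.2 then (p (i.1, i.2.2) : ℂ) * ρB i.1 i.2.2 i.2.1 j.2.1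
      else 0) :
    entropy (redAX ρ) + entropy (redBX ρ) - entropy ρ - entropy (redX ρ)
        ≤ min (entropy (redA ρ)) (entropy (redB ρ)) := by
    classical
  set q : X → ℝ := fun x => ∑ a, p (a, x) with hqdef
  set pA : A → ℝ := fun a => ∑ x, p (a, x) with hpAdef
  set S : A → X → ℝ := fun a x => entropy (ρB a x) with hSdef
  set σ : X → Matrix B B ℂ := fun x => ∑ a, (p (a, x) : ℂ) • ρB a x with hσdef
  have hpsd : ∀ a x, ((p (a, x) : ℂ) • ρB a x).PosSemidef :=
    fun a x => Scratch2.posSemidef_smul (hρB a x).1 (hp (a, x))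
  have hσpsd : ∀ x, (σ x).PosSemidef := fun x => Scratch4.posSemidef_sum _ (fun a => hpsd a x)
  have htrB : ∀ a x, (((ρB a x).trace)).re = 1 := by
    intro a x
    rw [(hρB a x).2]
    simp
  have hdiagsum : ∀ a x, ∑ b, ρB a x b b = 1 := by
    intro a x
    have h := (hρB a x).2
    simpa [Matrix.trace, Matrix.diag] using h
  have htrσ : ∀ x, (σ x).trace = ((q x : ℝ) : ℂ) := by
    intro x
    rw [hσdef]
    rw [Matrix.trace_sum]
    rw [hqdef]
    push_cast
    refine Finset.sum_congr rfl fun a _ => ?_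
    rw [Matrix.trace_smul, (hρB a x).2, smul_eq_mul, mul_one]
  have hq1 : ∑ x, q x = 1 := by
    rw [hqdef, ← hpsum, Fintype.sum_prod_type]
    exact Finset.sum_comm
  -- reduced states
  have hAX : redAX ρ = Matrix.diagonal (fun ax : A × X => ((p ax : ℝ) : ℂ)) := by
    ext ⟨a, x⟩ ⟨a', x'⟩
    show (∑ b, ρ (a, b, x) (a', b, x')) = _
    rw [hρ]
    simp only [Matrix.of_apply]
    by_cases h1 : a = a'
    · by_cases h2 : x = x'
      · subst h1; subst h2
        rw [Matrix.diagonal_apply_eq]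
        rw [Finset.sum_congr rfl (fun b (_ : b ∈ Finset.univ) => if_pos (by tauto))]
        rw [← Finset.mul_sum, hdiagsum a x, mul_one]
      · rw [Matrix.diagonal_apply_ne _ (by simp [Prod.ext_iff, h2])]
        simp [h2]
    · rw [Matrix.diagonal_apply_ne _ (by simp [Prod.ext_iff, h1])]
      simp [h1]
  have eAX : entropy (redAX ρ) = ∑ ax : A × X, Real.negMulLog (p ax) := by
    rw [hAX]
    exact Scratch2.entropy_diagonal _
  have hX : redX ρ = Matrix.diagonal (fun x : X => ((q x : ℝ) : ℂ)) := by
    ext x x'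
    show (∑ a, ∑ b, ρ (a, b, x) (a, b, x')) = _
    rw [hρ]
    simp only [Matrix.of_apply]
    by_cases h2 : x = x'
    · subst h2
      rw [Matrix.diagonal_apply_eq]
      rw [Finset.sum_congr rfl (fun a (_ : a ∈ Finset.univ) => by
        rw [Finset.sum_congr rfl (fun b (_ : b ∈ Finset.univ) => if_pos (by tauto)),
          ← Finset.mul_sum, hdiagsum a x, mul_one])]
      rw [show q x = ∑ a, p (a, x) from rfl]
      push_cast
      rfl
    · rw [Matrix.diagonal_apply_ne _ h2]
      simp [h2]
  have eX : entropy (redX ρ) = ∑ x, Real.negMulLog (q x) := by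
    rw [hX]
    exact Scratch2.entropy_diagonal _
  have hA : redA ρ = Matrix.diagonal (fun a : A => ((pA a : ℝ) : ℂ)) := by
    ext a a'
    show (∑ b, ∑ x, ρ (a, b, x) (a', b, x)) = _
    rw [hρ]
    simp only [Matrix.of_apply]
    by_cases h1 : a = a'
    · subst h1
      rw [Matrix.diagonal_apply_eq]
      rw [Finset.sum_comm]
      rw [Finset.sum_congr rfl (fun x (_ : x ∈ Finset.univ) => by
        rw [Finset.sum_congr rfl (fun b (_ : b ∈ Finset.univ) => if_pos (by tauto)),
          ← Finset.mul_sum, hdiagsum a x, mul_one])]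
      rw [show pA a = ∑ x, p (a, x) from rfl]
      push_cast
      rfl
    · rw [Matrix.diagonal_apply_ne _ h1]
      simp [h1]
  have eA : entropy (redA ρ) = ∑ a, Real.negMulLog (pA a) := by
    rw [hA]
    exact Scratch2.entropy_diagonal _
  have hBX : redBX ρ = Matrix.blockDiagonal σ := by
    ext ⟨b, x⟩ ⟨b', x'⟩
    show (∑ a, ρ (a, b, x) (a, b', x')) = Matrix.blockDiagonal σ (b, x) (b', x')
    rw [hρ, Matrix.blockDiagonal_apply]
    simp only [Matrix.of_apply]
    by_cases h2 : x = x'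
    · subst h2
      rw [if_pos rfl]
      rw [show σ x = ∑ a, (p (a, x) : ℂ) • ρB a x from rfl, Matrix.sum_apply]
      refine Finset.sum_congr rfl fun a _ => ?_
      rw [if_pos (by tauto), Matrix.smul_apply, smul_eq_mul]
    · rw [if_neg h2]
      simp [h2]
  have eBX : entropy (redBX ρ) = ∑ x, entropy (σ x) := by
    rw [hBX]
    exact Scratch2.entropy_blockDiagonal σ (fun x => (hσpsd x).1)
  have hBred : redB ρ = ∑ x, σ x := by
    ext b b'
    show (∑ a, ∑ x, ρ (a, b, x) (a, b', x)) = (∑ x, σ x) b b'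
    rw [hρ, Matrix.sum_apply]
    simp only [Matrix.of_apply]
    rw [Finset.sum_comm]
    refine Finset.sum_congr rfl fun x _ => ?_
    rw [show σ x = ∑ a, (p (a, x) : ℂ) • ρB a x from rfl, Matrix.sum_apply]
    refine Finset.sum_congr rfl fun a _ => ?_
    rw [if_pos (by tauto), Matrix.smul_apply, smul_eq_mul]
  -- full state
  set τ : A × X → Matrix B B ℂ := fun ax => (p ax : ℂ) • ρB ax.1 ax.2 with hτdef
  have hτherm : ∀ ax : A × X, (τ ax).IsHermitian := fun ax => (hpsd ax.1 ax.2).1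
  set e : (A × B × X) ≃ (B × (A × X)) :=
    { toFun := fun i => (i.2.1, (i.1, i.2.2))
      invFun := fun j => (j.2.1, (j.1, j.2.2))
      left_inv := by rintro ⟨a, b, x⟩; rfl
      right_inv := by rintro ⟨b, a, x⟩; rfl } with hedef
  have hρre : ρ = (Matrix.reindex e.symm e.symm) (Matrix.blockDiagonal τ) := by
    ext ⟨a, b, x⟩ ⟨a', b', x'⟩
    simp only [hρ, Matrix.reindex_apply, Matrix.submatrix_apply, Matrix.of_apply,
      Equiv.symm_symm, hedef, Equiv.coe_fn_mk, Matrix.blockDiagonal_apply, hτdef]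
    by_cases h1 : a = a'
    · by_cases h2 : x = x'
      · subst h1; subst h2
        simp [Matrix.smul_apply, smul_eq_mul]
      · simp [h2, Prod.ext_iff]
    · simp [h1, Prod.ext_iff]
  have eρ : entropy ρ
      = ∑ ax : A × X, (Real.negMulLog (p ax) + p ax * S ax.1 ax.2) := by
    rw [hρre, Scratch2.entropy_reindex _ (Scratch2.isHermitian_blockDiagonal τ hτherm),
      Scratch2.entropy_blockDiagonal τ hτherm]
    refine Finset.sum_congr rfl fun ax _ => ?_
    rw [show τ ax = (p ax : ℂ) • ρB ax.1 ax.2 from rfl]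
    rw [Scratch2.entropy_smul (hρB ax.1 ax.2).1 (hp ax), htrB ax.1 ax.2, mul_one]
  -- inequalities
  have hSnn : ∀ a x, 0 ≤ S a x := fun a x => entropy_nonneg_aux (hρB a x).1 (htrB a x)
  have hsub1 : ∀ x, entropy (σ x)
      ≤ ∑ a, (Real.negMulLog (p (a, x)) + p (a, x) * S a x) := by
    intro x
    calc entropy (σ x) ≤ ∑ a, entropy ((p (a, x) : ℂ) • ρB a x) :=
          Scratch4.entropy_sum_le _ (fun a => hpsd a x)
      _ = _ := by
          refine Finset.sum_congr rfl fun a _ => ?_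
          rw [Scratch2.entropy_smul (hρB a x).1 (hp (a, x)), htrB a x, mul_one]
  have hconc : ∑ x, entropy (σ x)
      ≤ entropy (∑ x, σ x) + ∑ x, Real.negMulLog (q x) := by
    have htr1 : ∑ x, (((σ x).trace)).re = 1 := by
      rw [Finset.sum_congr rfl fun x _ => by rw [htrσ x, Complex.ofReal_re]]
      exact hq1
    have h1 := Scratch5.entropy_conc σ hσpsd htr1
    calc ∑ x, entropy (σ x)
        ≤ entropy (∑ x, σ x) + ∑ x, Real.negMulLog ((((σ x).trace)).re) := h1
      _ = _ := by
          congr 1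
          refine Finset.sum_congr rfl fun x _ => ?_
          rw [htrσ x, Complex.ofReal_re]
  have hshannon : ∑ ax : A × X, Real.negMulLog (p ax)
      ≤ (∑ a, Real.negMulLog (pA a)) + ∑ x, Real.negMulLog (q x) := by
    have h1 := Scratch5.subadd (fun a x => p (a, x)) (fun a x => hp (a, x)) (by
      rw [← hpsum, Fintype.sum_prod_type])
    rw [Fintype.sum_prod_type]
    have h2 : ∀ a, (∑ x, p (a, x)) = pA a := fun a => rfl
    have h3 : ∀ x, (∑ a, p (a, x)) = q x := fun x => rfl
    calc ∑ a, ∑ x, Real.negMulLog (p (a, x))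
        ≤ (∑ a, Real.negMulLog (∑ x, p (a, x)))
            + ∑ x, Real.negMulLog (∑ a, p (a, x)) := h1
      _ = _ := by
          congr 1
  -- assemble
  have hc1 : ∑ x, ∑ a, Real.negMulLog (p (a, x)) = ∑ ax : A × X, Real.negMulLog (p ax) := by
    rw [Fintype.sum_prod_type]
    exact Finset.sum_comm
  have hc2 : ∑ x, ∑ a, p (a, x) * S a x = ∑ ax : A × X, p ax * S ax.1 ax.2 := by
    rw [Fintype.sum_prod_type]
    exact Finset.sum_comm
  have hsplit : ∑ ax : A × X, (Real.negMulLog (p ax) + p ax * S ax.1 ax.2)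
      = (∑ ax : A × X, Real.negMulLog (p ax)) + ∑ ax : A × X, p ax * S ax.1 ax.2 :=
    Finset.sum_add_distrib
  have hR2nn : 0 ≤ ∑ ax : A × X, p ax * S ax.1 ax.2 :=
    Finset.sum_nonneg fun ax _ => mul_nonneg (hp ax) (hSnn ax.1 ax.2)
  rw [eAX, eBX, eρ, eX, hsplit]
  refine le_min ?_ ?_
  · -- bound by S(A)
    rw [eA]
    have h2 : ∑ x, entropy (σ x)
        ≤ ∑ x, ∑ a, (Real.negMulLog (p (a, x)) + p (a, x) * S a x) :=
      Finset.sum_le_sum fun x _ => hsub1 x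
    have h3 : ∑ x, ∑ a, (Real.negMulLog (p (a, x)) + p (a, x) * S a x)
        = (∑ ax : A × X, Real.negMulLog (p ax)) + ∑ ax : A × X, p ax * S ax.1 ax.2 := by
      rw [Finset.sum_congr rfl fun x (_ : x ∈ Finset.univ) =>
        (Finset.sum_add_distrib :
          ∑ a, (Real.negMulLog (p (a, x)) + p (a, x) * S a x) = _)]
      rw [Finset.sum_add_distrib, hc1, hc2]
    rw [h3] at h2
    linarith
  · -- bound by S(B)
    rw [hBred]
    linarith
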